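/- arXiv:2012.07698 — 3 statements merged into one kernel-verified Lean document; each statement's English description precedes it below -/
import Mathlib

section
/- Let D be an n×n distance matrix with compaction vector a, and suppose its compaction matrix D(a) = D - Σ_i a_i E_i has the following block structure for some positive integers n_1, n_2 with n_1 + n_2 = n and some δ > 0: the (i,j) entry equals 0 if i,j both lie in {1,…,n_1} or both lie in {n_1+1,…,n}, and equals δ otherwise. Then D(i,j) = a_i + a_j whenever i ≠ j lie in the same block, and D(i,j) = δ + a_i + a_j whenever they lie in different blocks; consequently D is realized by a tree with two internal nodes v_1, v_2 joined by an edge of weight δ, with leaves 1,…,n_1 attached to v_1 by edges of weights a_1,…,a_{n_1}, and leaves n_1+1,…,n attached to v_2 by edges of weights a_{n_1+1},…,a_n. -/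
noncomputable def walkWeight {V : Type*} {G : SimpleGraph V} (w : V → V → ℝ) {u v : V}
    (p : G.Walk u v) : ℝ := (p.darts.map (fun d => w d.fst d.snd)).sum

noncomputable def gdist {V : Type*} (G : SimpleGraph V) (w : V → V → ℝ) (u v : V) : ℝ :=
  sInf {x | ∃ p : G.Walk u v, x = walkWeight w p}

def IsDistanceMatrix {n : ℕ} (D : Fin n → Fin n → ℝ) : Prop :=
  (∀ i j, D i j = D j i) ∧ (∀ i, D i i = 0) ∧ (∀ i j, 0 ≤ D i j) ∧
    (∀ i j k, D i j ≤ D i k + D k j)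

def Ematrix {n : ℕ} (i : Fin n) : Fin n → Fin n → ℝ :=
  fun j k => if (j = i ∧ k ≠ i) ∨ (j ≠ i ∧ k = i) then 1 else 0

noncomputable def compaction {n : ℕ} (D : Fin n → Fin n → ℝ) (i : Fin n) : ℝ :=
  (1/2) * sInf {x | ∃ p r : Fin n, p ≠ i ∧ r ≠ i ∧ x = D p i + D i r - D p r}

lemma walkWeight_nil {V : Type*} {G : SimpleGraph V} (w : V → V → ℝ) {u : V} :
    walkWeight w (SimpleGraph.Walk.nil : G.Walk u u) = 0 := by
  simp [walkWeight]

lemma walkWeight_cons {V : Type*} {G : SimpleGraph V} (w : V → V → ℝ) {u v x : V}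
    (h : G.Adj u v) (p : G.Walk v x) :
    walkWeight w (SimpleGraph.Walk.cons h p) = w u v + walkWeight w p := by
  simp [walkWeight]

lemma walkWeight_lb {V : Type*} {G : SimpleGraph V} (w : V → V → ℝ) (f : V → ℝ)
    (hadj : ∀ u v, G.Adj u v → f u ≤ w u v + f v) {u v : V} (hv : f v ≤ 0)
    (p : G.Walk u v) : f u ≤ walkWeight w p := by
  induction p with
  | nil => simpa [walkWeight_nil]
  | cons h q ih =>
    rw [walkWeight_cons]
    have h1 := hadj _ _ h
    have h2 := ih hv
    linarith

/-- If the compaction matrix has the two-block structure (0 within blocks, δ across),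
then `D(i,j) = a_i + a_j` within a block and `δ + a_i + a_j` across blocks, and `D` is
realized by the double-star tree with hubs `inr false`, `inr true` joined by an edge of
weight `δ`. -/
theorem stmt3 {n n1 n2 : ℕ} (hn : n1 + n2 = n) (hn1 : 0 < n1) (hn2 : 0 < n2)
    (D : Fin n → Fin n → ℝ) (hD : IsDistanceMatrix D) (δ : ℝ) (hδ : 0 < δ)
    (hblock : ∀ i j : Fin n,
      D i j - ∑ k, compaction D k * Ematrix k i j =
        if ((i.val < n1) ↔ (j.val < n1)) then 0 else δ) :
    ((∀ i j : Fin n, i ≠ j → ((i.val < n1) ↔ (j.val < n1)) →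
        D i j = compaction D i + compaction D j) ∧
     (∀ i j : Fin n, ¬((i.val < n1) ↔ (j.val < n1)) →
        D i j = δ + compaction D i + compaction D j)) ∧
    (∀ i j : Fin n,
      gdist (SimpleGraph.fromRel (fun u v : Fin n ⊕ Bool =>
          (∃ p : Fin n, u = Sum.inl p ∧
            v = (if p.val < n1 then Sum.inr false else Sum.inr true)) ∨
          (u = Sum.inr false ∧ v = Sum.inr true)))
        (fun u v => match u, v with
          | Sum.inl p, _ => compaction D p
          | _, Sum.inl q => compaction D q
          | _, _ => δ)
        (Sum.inl i) (Sum.inl j) = D i j) := by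
  obtain ⟨hsymm, hdiag, hpos, htri⟩ := hD
  set a : Fin n → ℝ := compaction D with ha_def
  -- a is nonnegative
  have hcard : 1 < n := by omega
  have ha : ∀ i, 0 ≤ a i := by
    intro i
    obtain ⟨p, hp⟩ := Fintype.exists_ne_of_one_lt_card (by simpa using hcard) i
    have hne : (2 * D p i) ∈ {x | ∃ p' r : Fin n, p' ≠ i ∧ r ≠ i ∧ x = D p' i + D i r - D p' r} := by
      refine ⟨p, p, hp, hp, ?_⟩
      rw [hdiag, hsymm i p]; ring
    have h0 : 0 ≤ sInf {x | ∃ p' r : Fin n, p' ≠ i ∧ r ≠ i ∧ x = D p' i + D i r - D p' r} := by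
      apply le_csInf ⟨_, hne⟩
      rintro x ⟨p', r, _, _, rfl⟩
      have := htri p' r i
      linarith
    rw [ha_def]
    unfold compaction
    linarith
  -- sum formula
  have hsum : ∀ i j : Fin n, i ≠ j → ∑ k, a k * Ematrix k i j = a i + a j := by
    intro i j hij
    have heach : ∀ k, a k * Ematrix k i j =
        (if k = i then a i else 0) + (if k = j then a j else 0) := by
      intro k
      unfold Ematrix
      by_cases h1 : k = i
      · subst h1
        simp [hij, Ne.symm hij]
      · by_cases h2 : k = j
        · subst h2
          simp [hij, h1, Ne.symm hij, Ne.symm h1]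
        · simp [h1, h2, Ne.symm h1, Ne.symm h2]
    rw [Finset.sum_congr rfl (fun k _ => heach k), Finset.sum_add_distrib]
    simp
  -- block formulas
  have h1 : ∀ i j : Fin n, i ≠ j → ((i.val < n1) ↔ (j.val < n1)) → D i j = a i + a j := by
    intro i j hij hb
    have := hblock i j
    rw [if_pos hb, hsum i j hij] at this
    linarith
  have h2 : ∀ i j : Fin n, ¬((i.val < n1) ↔ (j.val < n1)) → D i j = δ + a i + a j := by
    intro i j hb
    have hij : i ≠ j := by
      rintro rfl; exact hb Iff.rfl
    have := hblock i j
    rw [if_neg hb, hsum i j hij] at this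
    linarith
  refine ⟨⟨h1, h2⟩, ?_⟩
  intro i j
  set V := (Fin n ⊕ Bool)
  set rel : V → V → Prop := (fun u v : Fin n ⊕ Bool =>
          (∃ p : Fin n, u = Sum.inl p ∧
            v = (if p.val < n1 then Sum.inr false else Sum.inr true)) ∨
          (u = Sum.inr false ∧ v = Sum.inr true)) with hrel
  set G := SimpleGraph.fromRel rel with hG
  set w : V → V → ℝ := (fun u v => match u, v with
          | Sum.inl p, _ => compaction D p
          | _, Sum.inl q => compaction D q
          | _, _ => δ) with hw
  -- the potential function towards leaf j
  set f : V → ℝ := fun u => match u with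
    | Sum.inl p => D p j
    | Sum.inr b => a j + (if (decide (j.val < n1) = !b) then 0 else δ) with hf
  have hfj : f (Sum.inl j) = 0 := by simp [hf, hdiag]
  -- key leaf-hub inequality
  have hkey : ∀ (p : Fin n) (b : Bool), (decide (p.val < n1) = !b) →
      (D p j ≤ a p + (a j + if decide (j.val < n1) = !b then 0 else δ)) ∧
      (a j + (if decide (j.val < n1) = !b then 0 else δ) ≤ a p + D p j) := by
    intro p b hpb
    have hap := ha p
    have haj := ha j
    cases b
    · have hp : p.val < n1 := by simpa using hpb
      by_cases hj : j.val < n1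
      · rw [if_pos (by simpa using hj)]
        rcases eq_or_ne p j with rfl | hpj
        · rw [hdiag]; constructor <;> linarith
        · have := h1 p j hpj (by simp [hp, hj]); constructor <;> linarith
      · rw [if_neg (by simpa using hj)]
        have := h2 p j (by simp [hp, hj]); constructor <;> linarith
    · have hp : ¬ p.val < n1 := by simpa using hpb
      by_cases hj : j.val < n1
      · rw [if_neg (by simpa using hj)]
        have := h2 p j (by simp [hp, hj]); constructor <;> linarith
      · rw [if_pos (by simpa using hj)]
        rcases eq_or_ne p j with rfl | hpj
        · rw [hdiag]; constructor <;> linarith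
        · have := h1 p j hpj (by simp [hp, hj]); constructor <;> linarith
  -- key edge inequality
  have hadj : ∀ u v : V, G.Adj u v → f u ≤ w u v + f v := by
    intro u v huv
    rw [hG, SimpleGraph.fromRel_adj] at huv
    obtain ⟨hne, hr | hr⟩ := huv <;>
      obtain ⟨p, rfl, rfl⟩ | ⟨rfl, rfl⟩ := hr
    · -- u = inl p, v = hub p
      by_cases hp : p.val < n1
      · have := (hkey p false (by simpa using hp)).1
        simpa [hf, hw, hp] using this
      · have := (hkey p true (by simpa using hp)).1
        simpa [hf, hw, hp] using this
    · -- u = inr false, v = inr true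
      by_cases hj : j.val < n1 <;> simp [hf, hw, hj] <;> linarith
    · -- v = inl p, u = hub p
      by_cases hp : p.val < n1
      · have := (hkey p false (by simpa using hp)).2
        have h' : D p j = D j p := hsymm p j
        simp only [hf, hw, h'] at this ⊢
        simpa [hp] using this
      · have := (hkey p true (by simpa using hp)).2
        have h' : D p j = D j p := hsymm p j
        simp only [hf, hw, h'] at this ⊢
        simpa [hp] using this
    · -- v = inr false, u = inr true
      by_cases hj : j.val < n1 <;> simp [hf, hw, hj] <;> linarith
  -- adjacency helpers
  have adj_leaf : ∀ p : Fin n,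
      G.Adj (Sum.inl p) (if p.val < n1 then Sum.inr false else Sum.inr true) := by
    intro p
    rw [hG, SimpleGraph.fromRel_adj]
    constructor
    · split <;> simp
    · exact Or.inl (Or.inl ⟨p, rfl, rfl⟩)
  have adj_hub : G.Adj (Sum.inr false : V) (Sum.inr true) := by
    rw [hG, SimpleGraph.fromRel_adj]
    exact ⟨by intro h; exact absurd (Sum.inr.inj h) (by simp), Or.inl (Or.inr ⟨rfl, rfl⟩)⟩
  -- exhibit a walk of weight D i j
  have hmem : (D i j) ∈ {x | ∃ p : G.Walk (Sum.inl i) (Sum.inl j), x = walkWeight w p} := by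
    by_cases hij : i = j
    · subst hij
      exact ⟨SimpleGraph.Walk.nil, by rw [walkWeight_nil, hdiag]⟩
    · by_cases hb : (i.val < n1) ↔ (j.val < n1)
      · -- same block
        have hhub : (if j.val < n1 then (Sum.inr false : V) else Sum.inr true)
            = (if i.val < n1 then Sum.inr false else Sum.inr true) := by
          by_cases hi : i.val < n1 <;> simp [hi, hb.symm, hb]
        refine ⟨SimpleGraph.Walk.cons (adj_leaf i)
          (SimpleGraph.Walk.cons (hhub ▸ (adj_leaf j).symm) SimpleGraph.Walk.nil), ?_⟩
        rw [walkWeight_cons, walkWeight_cons, walkWeight_nil, h1 i j hij hb]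
        by_cases hi : i.val < n1 <;> simp [hw, hi, ha_def]
      · -- different blocks
        by_cases hi : i.val < n1
        · have hj : ¬ j.val < n1 := fun h => hb ⟨fun _ => h, fun _ => hi⟩
          refine ⟨SimpleGraph.Walk.cons (by simpa [hi] using adj_leaf i)
            (SimpleGraph.Walk.cons adj_hub
              (SimpleGraph.Walk.cons (by simpa [hj] using (adj_leaf j).symm)
                SimpleGraph.Walk.nil)), ?_⟩
          rw [walkWeight_cons, walkWeight_cons, walkWeight_cons, walkWeight_nil,
            h2 i j hb]
          simp [hw]; ring
        · have hj : j.val < n1 := by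
            by_contra hj; exact hb ⟨fun h => absurd h hi, fun h => absurd h hj⟩
          refine ⟨SimpleGraph.Walk.cons (by simpa [hi] using adj_leaf i)
            (SimpleGraph.Walk.cons adj_hub.symm
              (SimpleGraph.Walk.cons (by simpa [hj] using (adj_leaf j).symm)
                SimpleGraph.Walk.nil)), ?_⟩
          rw [walkWeight_cons, walkWeight_cons, walkWeight_cons, walkWeight_nil,
            h2 i j hb]
          simp [hw]; ring
  -- lower bound
  have hlb : ∀ x ∈ {x | ∃ p : G.Walk (Sum.inl i) (Sum.inl j), x = walkWeight w p},
      D i j ≤ x := by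
    rintro x ⟨p, rfl⟩
    have := walkWeight_lb w f hadj (v := Sum.inl j) (le_of_eq hfj) p
    simpa [hf] using this
  unfold gdist
  exact le_antisymm (csInf_le ⟨D i j, hlb⟩ hmem) (le_csInf ⟨_, hmem⟩ hlb)
end

section
/- An n×n distance matrix D has a realization by a weighted n-cycle if and only if there exists a cyclic permutation π of {1,…,n} (i.e., a permutation consisting of a single n-cycle) such that for every i ∈ {1,…,n} and every s ∈ {1,…,n-1}, D(i, π^s(i)) = min( Σ_{t=0}^{s-1} D(π^t(i), π^{t+1}(i)), Σ_{t=s}^{n-1} D(π^t(i), π^{t+1}(i)) ). -/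
namespace Stmt4Aux
open SimpleGraph Finset

lemma walkWeight_nil {V : Type*} {G : SimpleGraph V} (w : V → V → ℝ) (u : V) :
    walkWeight w (Walk.nil : G.Walk u u) = 0 := by simp [walkWeight]

lemma walkWeight_cons {V : Type*} {G : SimpleGraph V} (w : V → V → ℝ) {u v x : V}
    (h : G.Adj u v) (p : G.Walk v x) :
    walkWeight w (Walk.cons h p) = w u v + walkWeight w p := by
  simp [walkWeight, Walk.darts_cons]

lemma walkWeight_concat {V : Type*} {G : SimpleGraph V} (w : V → V → ℝ) {u v x : V}
    (p : G.Walk u v) (h : G.Adj v x) :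
    walkWeight w (p.concat h) = walkWeight w p + w v x := by
  simp [walkWeight, Walk.darts_concat]

lemma walkWeight_copy {V : Type*} {G : SimpleGraph V} (w : V → V → ℝ) {u v u' v' : V}
    (p : G.Walk u v) (hu : u = u') (hv : v = v') :
    walkWeight w (p.copy hu hv) = walkWeight w p := by
  subst hu; subst hv; rfl

section Perm
variable {n : ℕ} {σ : Equiv.Perm (Fin n)}

lemma fix_all (ht : ∀ x y : Fin n, ∃ t : ℕ, (σ ^ t) x = y) {x : Fin n} {m : ℤ}
    (hx : (σ ^ m) x = x) : σ ^ m = 1 := by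
  ext y
  obtain ⟨t, rfl⟩ := ht x y
  have h1 : (σ ^ m) ((σ ^ t) x) = (σ ^ (t : ℤ)) ((σ ^ m) x) := by
    rw [← Equiv.Perm.mul_apply, ← Equiv.Perm.mul_apply, ← zpow_natCast σ t,
      ← zpow_add, ← zpow_add, add_comm]
  rw [hx, zpow_natCast] at h1
  simp only [Equiv.Perm.one_apply]
  exact congrArg Fin.val h1

lemma orderOf_eq (hn : 3 ≤ n) (ht : ∀ x y : Fin n, ∃ t : ℕ, (σ ^ t) x = y) :
    orderOf σ = n := by
  have hpos : 0 < orderOf σ := orderOf_pos σ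
  have x0 : Fin n := ⟨0, by omega⟩
  set f : Fin (orderOf σ) → Fin n := fun t => (σ ^ (t : ℕ)) x0 with hf
  have hinj : Function.Injective f := by
    suffices h : ∀ a b : Fin (orderOf σ), (a : ℕ) ≤ (b : ℕ) → f a = f b → a = b by
      intro a b hab
      rcases le_total (a : ℕ) (b : ℕ) with hle | hle
      · exact h a b hle hab
      · exact (h b a hle hab.symm).symm
    intro a b hle hab
    have hfix : (σ ^ ((b : ℕ) - (a : ℕ))) x0 = x0 := by
      have : (σ ^ (a : ℕ)) ((σ ^ ((b : ℕ) - (a : ℕ))) x0) = (σ ^ (a : ℕ)) x0 := by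
        rw [← Equiv.Perm.mul_apply, ← pow_add, Nat.add_sub_cancel' hle]
        exact hab.symm
      exact (σ ^ (a : ℕ)).injective this
    have hfix' : (σ ^ ((((b : ℕ) - (a : ℕ) : ℕ)) : ℤ)) x0 = x0 := by
      rw [zpow_natCast]; exact hfix
    have : σ ^ (((b : ℕ) - (a : ℕ) : ℕ) : ℤ) = 1 := fix_all ht hfix'
    have hdvd : orderOf σ ∣ (b : ℕ) - (a : ℕ) :=
      orderOf_dvd_of_pow_eq_one (by rw [← zpow_natCast σ]; exact this)
    have hb := b.isLt
    have ha := a.isLt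
    have := Nat.eq_zero_of_dvd_of_lt hdvd
    have hba : (b : ℕ) - (a : ℕ) = 0 := by
      by_contra h
      have := Nat.le_of_dvd (Nat.pos_of_ne_zero h) hdvd
      omega
    exact Fin.ext (by omega)
  have hsurj : Function.Surjective f := by
    intro y
    obtain ⟨t, rfl⟩ := ht x0 y
    exact ⟨⟨t % orderOf σ, Nat.mod_lt _ hpos⟩, by simp [hf, pow_mod_orderOf]⟩
  have := Fintype.card_of_bijective ⟨hinj, hsurj⟩
  simpa using this

lemma zpow_n_eq_one (hn : 3 ≤ n) (ht : ∀ x y : Fin n, ∃ t : ℕ, (σ ^ t) x = y) :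
    σ ^ (n : ℤ) = 1 := by
  have h := pow_orderOf_eq_one σ
  rw [orderOf_eq hn ht] at h
  rw [zpow_natCast]; exact h

lemma pow_n_eq_one (hn : 3 ≤ n) (ht : ∀ x y : Fin n, ∃ t : ℕ, (σ ^ t) x = y) :
    σ ^ n = 1 := by
  have h := pow_orderOf_eq_one σ
  rwa [orderOf_eq hn ht] at h

lemma dvd_of_fix (hn : 3 ≤ n) (ht : ∀ x y : Fin n, ∃ t : ℕ, (σ ^ t) x = y)
    {x : Fin n} {m : ℤ} (hx : (σ ^ m) x = x) : (n : ℤ) ∣ m := by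
  have := fix_all ht hx
  have h := orderOf_dvd_iff_zpow_eq_one.mpr this
  rwa [orderOf_eq hn ht] at h

lemma sigma_ne (hn : 3 ≤ n) (ht : ∀ x y : Fin n, ∃ t : ℕ, (σ ^ t) x = y)
    (x : Fin n) : σ x ≠ x := by
  intro h
  have : σ ^ ((1 : ℕ) : ℤ) = 1 := fix_all ht (by simpa using h)
  have hd := orderOf_dvd_iff_zpow_eq_one.mpr this
  rw [orderOf_eq hn ht] at hd
  have := Int.le_of_dvd (by norm_num) hd
  omega

lemma sigma_sq_ne (hn : 3 ≤ n) (ht : ∀ x y : Fin n, ∃ t : ℕ, (σ ^ t) x = y)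
    (x : Fin n) : σ (σ x) ≠ x := by
  intro h
  have hx : (σ ^ ((2 : ℕ) : ℤ)) x = x := by
    rw [zpow_natCast, pow_two, Equiv.Perm.mul_apply, h]
  have hd := orderOf_dvd_iff_zpow_eq_one.mpr (fix_all ht hx)
  rw [orderOf_eq hn ht] at hd
  have := Int.le_of_dvd (by norm_num) hd
  omega

end Perm

section Graph
variable {n : ℕ} (σ : Equiv.Perm (Fin n)) (w : Fin n → ℝ)

def G' : SimpleGraph (Fin n) := SimpleGraph.fromRel (fun u v => v = σ u)

noncomputable def Wt : Fin n → Fin n → ℝ :=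
  fun u v => if v = σ u then w u else if u = σ v then w v else 0

variable {σ}

lemma adj_succ (hσ1 : ∀ x : Fin n, σ x ≠ x) (x : Fin n) : (G' σ).Adj x (σ x) := by
  rw [G', SimpleGraph.fromRel_adj]
  exact ⟨Ne.symm (hσ1 x), Or.inl rfl⟩

lemma adj_pred (hσ1 : ∀ x : Fin n, σ x ≠ x) (x : Fin n) : (G' σ).Adj (σ x) x := by
  rw [G', SimpleGraph.fromRel_adj]
  exact ⟨hσ1 x, Or.inr rfl⟩

lemma wt_succ (x : Fin n) : Wt σ w x (σ x) = w x := if_pos rfl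

lemma wt_pred (hσ2 : ∀ x : Fin n, σ (σ x) ≠ x) (x : Fin n) : Wt σ w (σ x) x = w x := by
  rw [Wt, if_neg, if_pos rfl]
  intro h
  exact hσ2 x (h ▸ rfl)

lemma wt_nonneg (hw : ∀ x, 0 ≤ w x) (u v : Fin n) : 0 ≤ Wt σ w u v := by
  rw [Wt]
  split_ifs <;> first | exact hw _ | exact le_refl 0

lemma walkWeight_nonneg (hw : ∀ x, 0 ≤ w x) {u v : Fin n} (p : (G' σ).Walk u v) :
    0 ≤ walkWeight (Wt σ w) p := by
  apply List.sum_nonneg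
  intro x hx
  obtain ⟨d, _, rfl⟩ := List.mem_map.mp hx
  exact wt_nonneg w hw _ _

lemma gdist_bddBelow (hw : ∀ x, 0 ≤ w x) (u v : Fin n) :
    BddBelow {x | ∃ p : (G' σ).Walk u v, x = walkWeight (Wt σ w) p} := by
  refine ⟨0, ?_⟩
  rintro x ⟨p, rfl⟩
  exact walkWeight_nonneg w hw p

lemma gdist_le (hw : ∀ x, 0 ≤ w x) {u v : Fin n} (p : (G' σ).Walk u v) :
    gdist (G' σ) (Wt σ w) u v ≤ walkWeight (Wt σ w) p :=
  csInf_le (gdist_bddBelow w hw u v) ⟨p, rfl⟩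

lemma forward_walk (hσ1 : ∀ x : Fin n, σ x ≠ x) (i : Fin n) (s : ℕ) :
    ∃ p : (G' σ).Walk i ((σ ^ s) i),
      walkWeight (Wt σ w) p = ∑ t ∈ Finset.range s, w ((σ ^ t) i) := by
  induction s with
  | zero => exact ⟨SimpleGraph.Walk.nil.copy rfl (by simp), by simp [walkWeight]⟩
  | succ s ih =>
    obtain ⟨p, hp⟩ := ih
    have hstep : (σ ^ (s + 1)) i = σ ((σ ^ s) i) := by
      rw [pow_succ', Equiv.Perm.mul_apply]
    refine ⟨(p.concat (adj_succ hσ1 ((σ ^ s) i))).copy rfl hstep.symm, ?_⟩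
    rw [walkWeight_copy, walkWeight_concat, hp, wt_succ, Finset.sum_range_succ]

lemma backward_walk (hσ1 : ∀ x : Fin n, σ x ≠ x) (hσ2 : ∀ x : Fin n, σ (σ x) ≠ x)
    (i : Fin n) (s : ℕ) (d : ℕ) :
    ∃ p : (G' σ).Walk ((σ ^ (s + d)) i) ((σ ^ s) i),
      walkWeight (Wt σ w) p = ∑ t ∈ Finset.range d, w ((σ ^ (s + t)) i) := by
  induction d with
  | zero => exact ⟨SimpleGraph.Walk.nil.copy rfl rfl, by simp [walkWeight]⟩
  | succ d ih =>
    obtain ⟨p, hp⟩ := ih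
    have hstep : (σ ^ (s + (d + 1))) i = σ ((σ ^ (s + d)) i) := by
      rw [← add_assoc, pow_succ', Equiv.Perm.mul_apply]
    refine ⟨(SimpleGraph.Walk.cons (adj_pred hσ1 ((σ ^ (s + d)) i)) p).copy hstep.symm rfl, ?_⟩
    rw [walkWeight_copy, walkWeight_cons, hp, wt_pred w hσ2, Finset.sum_range_succ, add_comm]

end Graph

section Phi

noncomputable def phi (b : ℤ → ℝ) (m : ℤ) : ℝ :=
  (∑ t ∈ Finset.range m.toNat, b t) - ∑ t ∈ Finset.range (-m).toNat, b (-(t : ℤ) - 1)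

variable {b : ℤ → ℝ}

lemma phi_zero : phi b 0 = 0 := by simp [phi]

lemma phi_succ (m : ℤ) : phi b (m + 1) = phi b m + b m := by
  rcases le_or_gt 0 m with hm | hm
  · have h1 : (m + 1).toNat = m.toNat + 1 := by omega
    have h2 : (-(m + 1)).toNat = 0 := by omega
    have h3 : (-m).toNat = 0 := by omega
    rw [phi, phi, h1, h2, h3, Finset.sum_range_succ]
    have : (m.toNat : ℤ) = m := Int.toNat_of_nonneg hm
    rw [this]
    simp
  · have h1 : (m + 1).toNat = 0 := by omega
    have h2 : m.toNat = 0 := by omega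
    have h3 : (-m).toNat = (-(m + 1)).toNat + 1 := by omega
    rw [phi, phi, h1, h2, h3, Finset.sum_range_succ]
    have : (-(((-(m + 1)).toNat : ℤ))) - 1 = m := by omega
    rw [this]
    simp

lemma phi_mono (hb0 : ∀ m, 0 ≤ b m) {j k : ℤ} (hjk : j ≤ k) : phi b j ≤ phi b k := by
  obtain ⟨d, rfl⟩ : ∃ d : ℕ, k = j + d := ⟨(k - j).toNat, by omega⟩
  clear hjk
  induction d with
  | zero => simp
  | succ d ih =>
    have e : ((((d : ℕ) + 1) : ℕ) : ℤ) = (d : ℤ) + 1 := by push_cast; ring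
    rw [e, ← add_assoc, phi_succ]
    linarith [hb0 (j + d)]

lemma phi_natCast (s : ℕ) : phi b (s : ℤ) = ∑ t ∈ Finset.range s, b (t : ℤ) := by
  rw [phi]
  simp

lemma phi_add_n {n : ℕ} (hper : ∀ m : ℤ, b (m + n) = b m) (m : ℤ) :
    phi b (m + n) = phi b m + phi b n := by
  induction m using Int.induction_on with
  | zero => simp [phi_zero]
  | succ k ih =>
    have : ((k : ℤ) + 1 + n) = ((k : ℤ) + n) + 1 := by ring
    rw [this, phi_succ, ih, phi_succ, hper]
    ring
  | pred k ih =>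
    have h4 : phi b ((-(k:ℤ) - 1 + n) + 1) = phi b (-(k:ℤ) - 1 + n) + b (-(k:ℤ) - 1 + n) :=
      phi_succ _
    have h5 : phi b ((-(k:ℤ) - 1) + 1) = phi b (-(k:ℤ) - 1) + b (-(k:ℤ) - 1) := phi_succ _
    have e4 : (-(k:ℤ) - 1 + n) + 1 = -(k:ℤ) + n := by ring
    have e5 : (-(k:ℤ) - 1) + 1 = -(k:ℤ) := by ring
    rw [e4] at h4
    rw [e5] at h5
    have h6 : b (-(k:ℤ) - 1 + n) = b (-(k:ℤ) - 1) := by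
      have : -(k:ℤ) - 1 + n = (-(k:ℤ) - 1) + n := by ring
      rw [this, hper]
    linarith [ih]

lemma phi_add_mul_n {n : ℕ} (hper : ∀ m : ℤ, b (m + n) = b m) (m : ℤ) (q : ℤ) :
    phi b (m + q * n) = phi b m + q * phi b n := by
  induction q using Int.induction_on with
  | zero => simp
  | succ k ih =>
    have e : m + ((k : ℤ) + 1) * n = (m + k * n) + n := by ring
    rw [e, phi_add_n hper, ih]
    push_cast
    ring
  | pred k ih =>
    have e : m + (-(k : ℤ)) * n = (m + (-(k : ℤ) - 1) * n) + n := by ring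
    rw [e, phi_add_n hper] at ih
    push_cast at ih ⊢
    linarith

end Phi

section Core
open Finset
variable {n : ℕ} {σ : Equiv.Perm (Fin n)} {w : Fin n → ℝ}

lemma core (hσ2 : ∀ x : Fin n, σ (σ x) ≠ x) (i : Fin n) (b : ℤ → ℝ)
    (hb0 : ∀ m, 0 ≤ b m) (hbw : ∀ m : ℤ, b m ≤ w ((σ ^ m) i)) :
    ∀ {x y : Fin n} (p : (G' σ).Walk x y) (j : ℤ), x = (σ ^ j) i →
      ∃ k : ℤ, y = (σ ^ k) i ∧ |phi b k - phi b j| ≤ walkWeight (Wt σ w) p := by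
  intro x y p
  induction p with
  | nil => exact fun j hj => ⟨j, hj, by simp [walkWeight]⟩
  | @cons u v z h q ih =>
    intro j hj
    rw [walkWeight_cons]
    rw [G', SimpleGraph.fromRel_adj] at h
    obtain ⟨hne, hrel | hrel⟩ := h
    · -- v = σ u
      have hv : v = (σ ^ (j + 1)) i := by
        rw [hrel, hj, ← Equiv.Perm.mul_apply, ← zpow_one_add, add_comm]
      obtain ⟨k, hk, hwk⟩ := ih (j + 1) hv
      refine ⟨k, hk, ?_⟩
      have hwt : Wt σ w u v = w u := by rw [hrel]; exact wt_succ w u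
      have hbj : b j ≤ w u := by rw [hj]; exact hbw j
      have habs : |phi b k - phi b j| ≤ |phi b k - phi b (j + 1)| + |phi b (j + 1) - phi b j| :=
        abs_sub_le _ _ _
      have heq : |phi b (j + 1) - phi b j| = b j := by
        rw [phi_succ]
        simp [abs_of_nonneg (hb0 j)]
      rw [hwt]
      linarith [habs, heq ▸ habs]
    · -- u = σ v
      have hv : v = (σ ^ (j - 1)) i := by
        have h1 : σ v = (σ ^ j) i := by rw [← hrel, hj]
        have h2 : v = σ⁻¹ ((σ ^ j) i) := by rw [← h1]; simp
        have h3 : σ⁻¹ * σ ^ j = σ ^ (j - 1) := by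
          rw [← zpow_neg_one, ← zpow_add, show (-1 : ℤ) + j = j - 1 from by ring]
        rw [h2, ← Equiv.Perm.mul_apply, h3]
      obtain ⟨k, hk, hwk⟩ := ih (j - 1) hv
      refine ⟨k, hk, ?_⟩
      have hwt : Wt σ w u v = w v := by
        rw [show u = σ v from hrel]
        exact wt_pred w hσ2 v
      have hbj : b (j - 1) ≤ w v := by rw [hv]; exact hbw (j - 1)
      have habs : |phi b k - phi b j| ≤ |phi b k - phi b (j - 1)| + |phi b (j - 1) - phi b j| :=
        abs_sub_le _ _ _
      have heq : |phi b (j - 1) - phi b j| = b (j - 1) := by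
        rw [show j = (j - 1) + 1 from by ring, phi_succ, show j - 1 + 1 - 1 = j - 1 from by ring]
        rw [abs_sub_comm]
        simp [abs_of_nonneg (hb0 (j - 1))]
      rw [hwt]
      linarith [habs, heq ▸ habs]

lemma gdist_lower (hn : 3 ≤ n) (ht : ∀ x y : Fin n, ∃ t : ℕ, (σ ^ t) x = y)
    (hw : ∀ x, 0 ≤ w x) (D : Fin n → Fin n → ℝ) (hD : IsDistanceMatrix D) (i : Fin n)
    (hDw : ∀ x : Fin n, D x (σ x) ≤ w x) (s : ℕ) (hsn : s ≤ n) :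
    min (∑ t ∈ Finset.range s, D ((σ ^ t) i) ((σ ^ (t + 1)) i))
        (∑ t ∈ Finset.Ico s n, D ((σ ^ t) i) ((σ ^ (t + 1)) i))
      ≤ gdist (G' σ) (Wt σ w) i ((σ ^ s) i) := by
  have hσ2 := sigma_sq_ne hn ht
  set b : ℤ → ℝ := fun m => D ((σ ^ m) i) ((σ ^ (m + 1)) i) with hb
  have hb0 : ∀ m, 0 ≤ b m := fun m => hD.2.2.1 _ _
  have hper : ∀ m : ℤ, b (m + n) = b m := by
    intro m
    have h1 : σ ^ (m + (n : ℤ)) = σ ^ m := by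
      rw [zpow_add, zpow_n_eq_one hn ht, mul_one]
    have h2 : σ ^ ((m + (n : ℤ)) + 1) = σ ^ (m + 1) := by
      rw [show m + (n : ℤ) + 1 = (m + 1) + n from by ring, zpow_add, zpow_n_eq_one hn ht,
        mul_one]
    simp only [hb, h1, h2]
  have hbw : ∀ m : ℤ, b m ≤ w ((σ ^ m) i) := by
    intro m
    have h1 : (σ ^ (m + 1)) i = σ ((σ ^ m) i) := by
      rw [add_comm, zpow_one_add, Equiv.Perm.mul_apply]
    simp only [hb]
    rw [h1]
    exact hDw _
  have hbnat : ∀ t : ℕ, b (t : ℤ) = D ((σ ^ t) i) ((σ ^ (t + 1)) i) := by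
    intro t
    simp only [hb]
    rw [show ((t : ℤ) + 1) = (((t + 1 : ℕ)) : ℤ) from by push_cast; ring, zpow_natCast,
      zpow_natCast]
  have hphis : phi b (s : ℤ) = ∑ t ∈ Finset.range s, D ((σ ^ t) i) ((σ ^ (t + 1)) i) := by
    rw [phi_natCast]; exact Finset.sum_congr rfl fun t _ => hbnat t
  have hphin : phi b (n : ℤ) =
      (∑ t ∈ Finset.range s, D ((σ ^ t) i) ((σ ^ (t + 1)) i)) +
      (∑ t ∈ Finset.Ico s n, D ((σ ^ t) i) ((σ ^ (t + 1)) i)) := by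
    rw [phi_natCast]
    have h1 : ∑ t ∈ Finset.range n, b (t : ℤ)
        = ∑ t ∈ Finset.range n, D ((σ ^ t) i) ((σ ^ (t + 1)) i) :=
      Finset.sum_congr rfl fun t _ => hbnat t
    rw [h1, Finset.range_eq_Ico, ← Finset.sum_Ico_consecutive _ (Nat.zero_le s) hsn,
      ← Finset.range_eq_Ico]
  apply le_csInf
  · obtain ⟨p, _⟩ := forward_walk w (sigma_ne hn ht) i s
    exact ⟨_, p, rfl⟩
  rintro x ⟨p, rfl⟩
  obtain ⟨k, hk, hwk⟩ := core hσ2 i b hb0 hbw p 0 (by simp)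
  rw [phi_zero, sub_zero] at hwk
  have hfix : (σ ^ (k - (s : ℤ))) i = i := by
    have h1 : (σ ^ (k : ℤ)) i = (σ ^ ((s : ℕ) : ℤ)) i := by rw [zpow_natCast]; exact hk.symm
    have h2 : (σ ^ (k - (s : ℤ))) i = (σ ^ (-(s : ℤ))) ((σ ^ (k : ℤ)) i) := by
      rw [← Equiv.Perm.mul_apply, ← zpow_add, show -(s:ℤ) + k = k - s from by ring]
    rw [h2, h1, ← Equiv.Perm.mul_apply, ← zpow_add]
    simp
  obtain ⟨q, hq⟩ := dvd_of_fix hn ht hfix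
  have hk' : k = (s : ℤ) + q * n := by rw [mul_comm]; omega
  have hphik : phi b k = phi b (s : ℤ) + (q : ℝ) * phi b (n : ℤ) := by
    rw [hk', phi_add_mul_n hper]
  have hsn' : phi b (s : ℤ) ≤ phi b (n : ℤ) := phi_mono hb0 (by exact_mod_cast hsn)
  have h0s : (0 : ℝ) ≤ phi b (s : ℤ) := by
    rw [← phi_zero (b := b)]
    exact phi_mono hb0 (by positivity)
  rw [← hphis]
  have hB : (∑ t ∈ Finset.Ico s n, D ((σ ^ t) i) ((σ ^ (t + 1)) i))
      = phi b (n : ℤ) - phi b (s : ℤ) := by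
    rw [hphin, hphis]; ring
  rw [hB]
  have h0n : (0 : ℝ) ≤ phi b (n : ℤ) := h0s.trans hsn'
  rcases le_or_gt 0 q with hq0 | hq0
  · have hqn : (0 : ℝ) ≤ (q : ℝ) * phi b (n : ℤ) :=
      mul_nonneg (by exact_mod_cast hq0) h0n
    have : phi b (s : ℤ) ≤ phi b k := by linarith
    have habs : phi b (s : ℤ) ≤ |phi b k| := this.trans (le_abs_self _)
    calc min (phi b (s:ℤ)) (phi b (n:ℤ) - phi b (s:ℤ)) ≤ phi b (s:ℤ) := min_le_left _ _
      _ ≤ |phi b k| := habs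
      _ ≤ walkWeight (Wt σ w) p := hwk
  · have hq1' : q ≤ -1 := by omega
    have hq1 : (q : ℝ) ≤ -1 := by exact_mod_cast hq1'
    have hqn : (q : ℝ) * phi b (n : ℤ) ≤ (-1) * phi b (n : ℤ) :=
      mul_le_mul_of_nonneg_right hq1 h0n
    have hneg : phi b k ≤ phi b (s : ℤ) - phi b (n : ℤ) := by linarith
    have habs : phi b (n : ℤ) - phi b (s : ℤ) ≤ |phi b k| := by
      have := neg_le_abs (phi b k)
      linarith
    calc min (phi b (s:ℤ)) (phi b (n:ℤ) - phi b (s:ℤ)) ≤ phi b (n:ℤ) - phi b (s:ℤ) :=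
        min_le_right _ _
      _ ≤ |phi b k| := habs
      _ ≤ walkWeight (Wt σ w) p := hwk

lemma chain (D : Fin n → Fin n → ℝ) (hD : IsDistanceMatrix D) (σ : Equiv.Perm (Fin n))
    (i : Fin n) (s c : ℕ) :
    D ((σ ^ s) i) ((σ ^ (s + c)) i)
      ≤ ∑ t ∈ Finset.Ico s (s + c), D ((σ ^ t) i) ((σ ^ (t + 1)) i) := by
  induction c with
  | zero => simp [hD.2.1]
  | succ c ih =>
    have htri := hD.2.2.2 ((σ ^ s) i) ((σ ^ (s + c + 1)) i) ((σ ^ (s + c)) i)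
    have hsum : ∑ t ∈ Finset.Ico s (s + c + 1), D ((σ ^ t) i) ((σ ^ (t + 1)) i)
        = (∑ t ∈ Finset.Ico s (s + c), D ((σ ^ t) i) ((σ ^ (t + 1)) i))
          + D ((σ ^ (s + c)) i) ((σ ^ (s + c + 1)) i) :=
      Finset.sum_Ico_succ_top (by omega) _
    rw [show s + (c + 1) = s + c + 1 from by ring, hsum]
    linarith

lemma gdist_self_eq_zero (hw : ∀ x, 0 ≤ w x) (u : Fin n) :
    gdist (G' σ) (Wt σ w) u u = 0 := by
  apply le_antisymm
  · have := gdist_le w hw (SimpleGraph.Walk.nil : (G' σ).Walk u u)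
    rwa [walkWeight_nil] at this
  · refine le_csInf ⟨walkWeight (Wt σ w) (SimpleGraph.Walk.nil : (G' σ).Walk u u),
      SimpleGraph.Walk.nil, rfl⟩ ?_
    rintro x ⟨p, rfl⟩
    exact walkWeight_nonneg w hw p

end Core
end Stmt4Aux


/-- A distance matrix has a realization by a weighted `n`-cycle iff there is a cyclic
permutation `π` such that `D(i, π^s(i))` is the minimum of the two arc sums, for all `i`
and `1 ≤ s ≤ n-1`. -/
theorem stmt4 {n : ℕ} (hn : 3 ≤ n) (D : Fin n → Fin n → ℝ) (hD : IsDistanceMatrix D) :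
    (∃ (σ : Equiv.Perm (Fin n)) (w : Fin n → ℝ),
        (∀ x y : Fin n, ∃ t : ℕ, (σ ^ t) x = y) ∧ (∀ x, 0 ≤ w x) ∧
        (∀ i j : Fin n,
          gdist (SimpleGraph.fromRel (fun u v : Fin n => v = σ u))
            (fun u v => if v = σ u then w u else if u = σ v then w v else 0) i j = D i j)) ↔
    (∃ π : Equiv.Perm (Fin n),
        (∀ x y : Fin n, ∃ t : ℕ, (π ^ t) x = y) ∧
        ∀ (i : Fin n) (s : ℕ), 1 ≤ s → s ≤ n - 1 →
          D i ((π ^ s) i) =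
            min (∑ t ∈ Finset.range s, D ((π ^ t) i) ((π ^ (t + 1)) i))
                (∑ t ∈ Finset.Ico s n, D ((π ^ t) i) ((π ^ (t + 1)) i))) := by
  constructor
  · rintro ⟨σ, w, ht, hw, hg⟩
    refine ⟨σ, ht, ?_⟩
    intro i s hs1 hs2
    have hσ1 := Stmt4Aux.sigma_ne hn ht
    have hDw : ∀ x : Fin n, D x (σ x) ≤ w x := by
      intro x
      have hedge := Stmt4Aux.gdist_le w hw
        (SimpleGraph.Walk.cons (Stmt4Aux.adj_succ hσ1 x) SimpleGraph.Walk.nil)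
      rw [Stmt4Aux.walkWeight_cons, Stmt4Aux.walkWeight_nil, Stmt4Aux.wt_succ, add_zero]
        at hedge
      have hg' : gdist (Stmt4Aux.G' σ) (Stmt4Aux.Wt σ w) x (σ x) = D x (σ x) := hg x (σ x)
      rwa [hg'] at hedge
    have hub1 : D i ((σ ^ s) i) ≤ ∑ t ∈ Finset.range s, D ((σ ^ t) i) ((σ ^ (t + 1)) i) := by
      have h := Stmt4Aux.chain D hD σ i 0 s
      rw [zero_add, pow_zero] at h
      simp only [Equiv.Perm.one_apply] at h
      rwa [← Finset.range_eq_Ico] at h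
    have hub2 : D i ((σ ^ s) i) ≤ ∑ t ∈ Finset.Ico s n, D ((σ ^ t) i) ((σ ^ (t + 1)) i) := by
      have hchain := Stmt4Aux.chain D hD σ i s (n - s)
      rw [show s + (n - s) = n from by omega] at hchain
      have hpn : (σ ^ n) i = i := by rw [Stmt4Aux.pow_n_eq_one hn ht]; rfl
      rw [hpn] at hchain
      calc D i ((σ ^ s) i) = D ((σ ^ s) i) i := hD.1 _ _
        _ ≤ _ := hchain
    have hlow := Stmt4Aux.gdist_lower hn ht hw D hD i hDw s (by omega)
    have hg' : gdist (Stmt4Aux.G' σ) (Stmt4Aux.Wt σ w) i ((σ ^ s) i) = D i ((σ ^ s) i) :=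
      hg i ((σ ^ s) i)
    rw [hg'] at hlow
    exact le_antisymm (le_min hub1 hub2) hlow
  · rintro ⟨π, ht, hmin⟩
    have hσ1 := Stmt4Aux.sigma_ne hn ht
    have hσ2 := Stmt4Aux.sigma_sq_ne hn ht
    refine ⟨π, fun x => D x (π x), ht, fun x => hD.2.2.1 _ _, ?_⟩
    set w : Fin n → ℝ := fun x => D x (π x) with hwdef
    have hw : ∀ x, 0 ≤ w x := fun x => hD.2.2.1 _ _
    intro i j
    obtain ⟨t, rfl⟩ := ht i j
    have hmod : (π ^ t) i = (π ^ (t % n)) i := by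
      conv_lhs => rw [show t = n * (t / n) + t % n from (Nat.div_add_mod t n).symm]
      rw [pow_add, pow_mul, Stmt4Aux.pow_n_eq_one hn ht, one_pow, one_mul]
    set s := t % n with hs
    have hslt : s < n := Nat.mod_lt _ (by omega)
    rw [hmod]
    rcases Nat.eq_zero_or_pos s with hs0 | hs0
    · rw [hs0]
      simp only [pow_zero, Equiv.Perm.one_apply]
      rw [hD.2.1]
      exact Stmt4Aux.gdist_self_eq_zero hw i
    · have hmineq := hmin i s hs0 (by omega)
      obtain ⟨p, hp⟩ := Stmt4Aux.forward_walk w hσ1 i s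
      have hup1 : gdist (Stmt4Aux.G' π) (Stmt4Aux.Wt π w) i ((π ^ s) i)
          ≤ ∑ t ∈ Finset.range s, D ((π ^ t) i) ((π ^ (t + 1)) i) := by
        have hle := Stmt4Aux.gdist_le w hw p
        rw [hp] at hle
        have hsum : ∑ x ∈ Finset.range s, w ((π ^ x) i)
            = ∑ x ∈ Finset.range s, D ((π ^ x) i) ((π ^ (x + 1)) i) := by
          refine Finset.sum_congr rfl fun x _ => ?_
          rw [hwdef]
          show D ((π ^ x) i) (π ((π ^ x) i)) = D ((π ^ x) i) ((π ^ (x + 1)) i)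
          rw [pow_succ', Equiv.Perm.mul_apply]
        rwa [hsum] at hle
      obtain ⟨pb, hpb⟩ := Stmt4Aux.backward_walk w hσ1 hσ2 i s (n - s)
      have hstart : (π ^ (s + (n - s))) i = i := by
        rw [show s + (n - s) = n from by omega, Stmt4Aux.pow_n_eq_one hn ht]; rfl
      have hup2 : gdist (Stmt4Aux.G' π) (Stmt4Aux.Wt π w) i ((π ^ s) i)
          ≤ ∑ t ∈ Finset.Ico s n, D ((π ^ t) i) ((π ^ (t + 1)) i) := by
        have hle := Stmt4Aux.gdist_le w hw (pb.copy hstart rfl)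
        rw [Stmt4Aux.walkWeight_copy, hpb] at hle
        have hsum : ∑ x ∈ Finset.range (n - s), w ((π ^ (s + x)) i)
            = ∑ t ∈ Finset.Ico s n, D ((π ^ t) i) ((π ^ (t + 1)) i) := by
          rw [Finset.sum_Ico_eq_sum_range]
          refine Finset.sum_congr rfl fun x _ => ?_
          rw [hwdef]
          show D ((π ^ (s + x)) i) (π ((π ^ (s + x)) i)) = _
          rw [pow_succ', Equiv.Perm.mul_apply]
        rwa [hsum] at hle
      have hDw : ∀ x : Fin n, D x (π x) ≤ w x := fun x => le_refl _
      have hlow := Stmt4Aux.gdist_lower hn ht hw D hD i hDw s (by omega)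
      have hres : gdist (Stmt4Aux.G' π) (Stmt4Aux.Wt π w) i ((π ^ s) i) = D i ((π ^ s) i) := by
        rw [hmineq]
        exact le_antisymm (le_min hup1 hup2) hlow
      exact hres
end

section
/- Let D be an n×n distance matrix whose compaction vector is the zero vector, i.e., for every index i, min over p ≠ i, r ≠ i of (D(p,i) + D(i,r) - D(p,r)) = 0. Suppose D satisfies the cycle-realization condition with respect to the cyclic permutation π = (2,3,…,n,1): for all i and 1 ≤ s ≤ n-1, D(i, i+s mod n) equals the minimum of the two arc sums of consecutive distances. Then for every i, D(i-1, i) + D(i, i+1) = D(i-1, i+1) (indices modulo n). -/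
open Fin.NatCast

private noncomputable def Aa {n : ℕ} [NeZero n] (D : Fin n → Fin n → ℝ) (j : Fin n) (s : ℕ) : ℝ :=
  ∑ t ∈ Finset.range s, D (j + (t : Fin n)) (j + (t : Fin n) + 1)

private lemma chainlem {n : ℕ} [NeZero n] (D : Fin n → Fin n → ℝ)
    (hdiag : ∀ i, D i i = 0) (htri : ∀ i j k, D i j ≤ D i k + D k j) (s : ℕ) (j : Fin n) :
    D j (j + (s : Fin n)) ≤ Aa D j s := by
  induction s with
  | zero => simp [Aa, hdiag]
  | succ m ih =>
    have hc : ((m + 1 : ℕ) : Fin n) = (m : Fin n) + 1 := by push_cast; ring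
    simp only [Aa] at ih ⊢
    rw [Finset.sum_range_succ, hc, ← add_assoc]
    calc D j (j + (m:Fin n) + 1) ≤ D j (j + (m:Fin n)) + D (j + (m:Fin n)) (j + (m:Fin n) + 1) :=
      htri _ _ _
    _ ≤ _ := by linarith [ih]

private lemma shiftlem {n : ℕ} [NeZero n] (D : Fin n → Fin n → ℝ) (j : Fin n) :
    Aa D j n = ∑ x : Fin n, D x (x + 1) := by
  rw [Aa.eq_def, ← Fin.sum_univ_eq_sum_range
    (fun t : ℕ => D (j + (t : Fin n)) (j + (t : Fin n) + 1)) n]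
  simp only [Fin.cast_val_eq_self]
  exact Fintype.sum_equiv (Equiv.addLeft j) _ _ (fun t => rfl)

private lemma splitlem {n : ℕ} [NeZero n] (D : Fin n → Fin n → ℝ) (j : Fin n) (s : ℕ) (hs : s ≤ n) :
    Aa D j s + ∑ t ∈ Finset.Ico s n, D (j + (t : Fin n)) (j + (t : Fin n) + 1)
      = ∑ x : Fin n, D x (x + 1) := by
  rw [← shiftlem D j]
  simp only [Aa, Finset.range_eq_Ico]
  exact Finset.sum_Ico_consecutive (fun t : ℕ => D (j + (t : Fin n)) (j + (t : Fin n) + 1))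
    (Nat.zero_le s) hs

private lemma castlem {n : ℕ} [NeZero n] (t : ℕ) : ((n + t : ℕ) : Fin n) = (t : Fin n) := by
  push_cast [Fin.natCast_self]
  simp

private lemma bound1 {n : ℕ} [NeZero n] (D : Fin n → Fin n → ℝ)
    (hdiag : ∀ i, D i i = 0) (htri : ∀ i j k, D i j ≤ D i k + D k j)
    (j : Fin n) (a b : ℕ) (hab : a ≤ b) :
    D (j + (a : Fin n)) (j + (b : Fin n)) ≤ Aa D j b - Aa D j a := by
  have h := chainlem D hdiag htri (b - a) (j + (a : Fin n))
  have hend : (j + (a : Fin n)) + ((b - a : ℕ) : Fin n) = j + (b : Fin n) := by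
    rw [add_assoc, ← Nat.cast_add, Nat.add_sub_cancel' hab]
  rw [hend] at h
  refine h.trans (le_of_eq ?_)
  have hsub : Aa D j b - Aa D j a
      = ∑ t ∈ Finset.Ico a b, D (j + (t : Fin n)) (j + (t : Fin n) + 1) := by
    simp only [Aa]
    rw [Finset.sum_Ico_eq_sub _ hab]
  rw [hsub, Finset.sum_Ico_eq_sum_range]
  simp only [Aa]
  apply Finset.sum_congr rfl
  intro t _
  have hc : ((a + t : ℕ) : Fin n) = (a : Fin n) + (t : Fin n) := by push_cast; ring
  simp [hc, add_assoc]

private lemma bound2 {n : ℕ} [NeZero n] (D : Fin n → Fin n → ℝ)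
    (hdiag : ∀ i, D i i = 0) (htri : ∀ i j k, D i j ≤ D i k + D k j)
    (j : Fin n) (a b : ℕ) (hb : b ≤ n) :
    D (j + (b : Fin n)) (j + (a : Fin n))
      ≤ (∑ x : Fin n, D x (x + 1)) - Aa D j b + Aa D j a := by
  have h := chainlem D hdiag htri (n - b + a) (j + (b : Fin n))
  have hend : (j + (b : Fin n)) + ((n - b + a : ℕ) : Fin n) = j + (a : Fin n) := by
    rw [add_assoc, ← Nat.cast_add]
    have : b + (n - b + a) = n + a := by omega
    rw [this, castlem]
  rw [hend] at h
  refine h.trans (le_of_eq ?_)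
  have h1 : Aa D (j + (b : Fin n)) (n - b + a)
      = ∑ t ∈ Finset.Ico b (n + a), D (j + (t : Fin n)) (j + (t : Fin n) + 1) := by
    rw [Finset.sum_Ico_eq_sum_range]
    have : n + a - b = n - b + a := by omega
    rw [this]
    simp only [Aa]
    apply Finset.sum_congr rfl
    intro t _
    have hc : ((b + t : ℕ) : Fin n) = (b : Fin n) + (t : Fin n) := by push_cast; ring
    simp [hc, add_assoc]
  have h2 : ∑ t ∈ Finset.Ico b (n + a), D (j + (t : Fin n)) (j + (t : Fin n) + 1)
      = (∑ t ∈ Finset.Ico b n, D (j + (t : Fin n)) (j + (t : Fin n) + 1))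
        + ∑ t ∈ Finset.Ico n (n + a), D (j + (t : Fin n)) (j + (t : Fin n) + 1) := by
    rw [Finset.sum_Ico_consecutive (fun t : ℕ => D (j + (t : Fin n)) (j + (t : Fin n) + 1)) hb
      (Nat.le_add_right n a)]
  have h3 : ∑ t ∈ Finset.Ico n (n + a), D (j + (t : Fin n)) (j + (t : Fin n) + 1) = Aa D j a := by
    rw [Finset.sum_Ico_eq_sum_range]
    have : n + a - n = a := by omega
    rw [this]
    simp only [Aa]
    apply Finset.sum_congr rfl
    intro t _
    rw [castlem]
  have h4 := splitlem D j b hb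
  rw [h1, h2, h3]
  linarith

private lemma keyineq (x y u v S : ℝ) (hx : 0 ≤ x) (hy : 0 ≤ y)
    (h1 : y ≤ u) (h2 : u ≤ v) (h3 : v ≤ S - x) :
    min x (S - x) + min y (S - y) - min (x + y) (S - (x + y)) ≤
      min u (S - u) + min v (S - v) - min (v - u) (S - (v - u)) := by
  simp only [min_def]
  split_ifs <;> linarith



/-- If the compaction vector of `D` is zero and `D` satisfies the cycle-realization
condition w.r.t. the permutation `i ↦ i+1 (mod n)`, then
`D(i-1, i) + D(i, i+1) = D(i-1, i+1)` for every `i`. -/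
theorem stmt7 {n : ℕ} (hn : 3 ≤ n) [NeZero n] (D : Fin n → Fin n → ℝ)
    (hD : IsDistanceMatrix D)
    (hcomp : ∀ i : Fin n,
      sInf {x | ∃ p r : Fin n, p ≠ i ∧ r ≠ i ∧ x = D p i + D i r - D p r} = 0)
    (hcond : ∀ (i : Fin n) (s : ℕ), 1 ≤ s → s ≤ n - 1 →
      D i (i + (s : Fin n)) =
        min (∑ t ∈ Finset.range s, D (i + (t : Fin n)) (i + (t : Fin n) + 1))
            (∑ t ∈ Finset.Ico s n, D (i + (t : Fin n)) (i + (t : Fin n) + 1))) :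
    ∀ i : Fin n, D (i - 1) i + D i (i + 1) = D (i - 1) (i + 1) := by

  obtain ⟨hsym, hdiag, hnn, htri⟩ := hD
  intro i
  set S : ℝ := ∑ x : Fin n, D x (x + 1) with hSdef
  have hval : ∀ (j : Fin n) (s : ℕ), 1 ≤ s → s ≤ n - 1 →
      D j (j + (s : Fin n)) = min (Aa D j s) (S - Aa D j s) := by
    intro j s h1 h2
    have h3 := splitlem D j s (by omega)
    have hA : (∑ t ∈ Finset.range s, D (j + (t : Fin n)) (j + (t : Fin n) + 1)) = Aa D j s := rfl
    have hB : (∑ t ∈ Finset.Ico s n, D (j + (t : Fin n)) (j + (t : Fin n) + 1))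
        = S - Aa D j s := by rw [← hSdef] at h3; linarith
    rw [hcond j s h1 h2, hA, hB]
  have hne1 : i + 1 ≠ i := by
    intro h
    nth_rewrite 2 [← add_zero i] at h
    have h1 := add_left_cancel h
    have h2 := congrArg Fin.val h1
    simp [Fin.val_one' n] at h2
    omega
  have hcast_n1 : ((n - 1 : ℕ) : Fin n) = -1 := by
    have h0 : ((n - 1 : ℕ) : Fin n) + 1 = 0 := by
      have h9 : (((n - 1) + 1 : ℕ) : Fin n) = 0 := by
        rw [show (n - 1) + 1 = n from by omega, Fin.natCast_self]
      rw [Nat.cast_add, Nat.cast_one] at h9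
      exact h9
    exact eq_neg_of_add_eq_zero_left h0
  have him1 : i + ((n - 1 : ℕ) : Fin n) = i - 1 := by rw [hcast_n1]; abel
  set x : ℝ := D (i - 1) i with hxdef
  set y : ℝ := D i (i + 1) with hydef
  have hsub1 : i - 1 + 1 = i := by abel
  have hAn1 : Aa D i (n - 1) = S - x := by
    have h5 := splitlem D i (n - 1) (by omega)
    rw [Finset.sum_Ico_eq_sum_range] at h5
    have he : n - (n - 1) = 1 := by omega
    rw [he, Finset.sum_range_one, Nat.add_zero, him1, hsub1] at h5
    rw [← hSdef, ← hxdef] at h5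
    linarith
  have hDim1 : x = min x (S - x) := by
    have h6 := hval i (n - 1) (by omega) (by omega)
    rw [him1, hAn1] at h6
    have h7 : S - (S - x) = x := by ring
    rw [h7, min_comm] at h6
    have h8 : x = D i (i - 1) := by rw [hxdef]; exact hsym _ _
    nth_rewrite 1 [h8]
    exact h6
  have hA1 : Aa D i 1 = y := by
    simp [Aa, Finset.sum_range_one, hydef]
  have hDi1y : y = min y (S - y) := by
    have h6 := hval i 1 (by omega) (by omega)
    rw [Nat.cast_one, hA1, ← hydef] at h6
    exact h6
  have hcast2 : ((2 : ℕ) : Fin n) = 1 + 1 := by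
    rw [show (2:ℕ) = 1 + 1 from rfl, Nat.cast_add, Nat.cast_one]
  have hD13 : D (i - 1) (i + 1) = min (x + y) (S - (x + y)) := by
    have h8 := hval (i - 1) 2 (by omega) (by omega)
    have hend : i - 1 + ((2 : ℕ) : Fin n) = i + 1 := by rw [hcast2]; abel
    rw [hend] at h8
    have hA2 : Aa D (i - 1) 2 = x + y := by
      simp only [Aa, Finset.sum_range_succ, Finset.sum_range_zero, Nat.cast_zero,
        Nat.cast_one, add_zero, zero_add]
      rw [hsub1, ← hxdef, ← hydef]
    rw [h8, hA2]
  have key : ∀ p r : Fin n, p ≠ i → r ≠ i → (p - i).val ≤ (r - i).val →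
      x + y - D (i - 1) (i + 1) ≤ D p i + D i r - D p r := by
    intro p r hp hr hab
    have ha1 : 1 ≤ (p - i).val := by
      rcases Nat.eq_zero_or_pos (p - i).val with h0|h0
      · exfalso
        apply hp
        have h1 : p - i = 0 := by
          apply Fin.val_injective; simpa using h0
        exact sub_eq_zero.mp h1
      · exact h0
    have hb1 : 1 ≤ (r - i).val := by
      rcases Nat.eq_zero_or_pos (r - i).val with h0|h0
      · exfalso
        apply hr
        have h1 : r - i = 0 := by
          apply Fin.val_injective; simpa using h0
        exact sub_eq_zero.mp h1
      · exact h0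
    have ha2 : (p - i).val ≤ n - 1 := by have := (p - i).isLt; omega
    have hb2 : (r - i).val ≤ n - 1 := by have := (r - i).isLt; omega
    have hpa : i + (((p - i).val : ℕ) : Fin n) = p := by
      rw [Fin.cast_val_eq_self, add_comm]
      exact sub_add_cancel p i
    have hrb : i + (((r - i).val : ℕ) : Fin n) = r := by
      rw [Fin.cast_val_eq_self, add_comm]
      exact sub_add_cancel r i
    have hDpi : D p i = min (Aa D i (p - i).val) (S - Aa D i (p - i).val) := by
      have h0 := hval i (p - i).val ha1 ha2
      rw [hpa] at h0
      rw [hsym p i]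
      exact h0
    have hDir : D i r = min (Aa D i (r - i).val) (S - Aa D i (r - i).val) := by
      have h0 := hval i (r - i).val hb1 hb2
      rw [hrb] at h0
      exact h0
    have hb1' : D p r ≤ Aa D i (r - i).val - Aa D i (p - i).val := by
      have h0 := bound1 D hdiag htri i (p - i).val (r - i).val hab
      rw [hpa, hrb] at h0
      exact h0
    have hb2' : D p r ≤ S - (Aa D i (r - i).val - Aa D i (p - i).val) := by
      have h9 := bound2 D hdiag htri i (p - i).val (r - i).val (le_of_lt (r - i).isLt)
      rw [hpa, hrb, ← hSdef] at h9
      rw [hsym p r]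
      linarith
    have hyu : y ≤ Aa D i (p - i).val := by
      have h0 : (0 : ℕ) ∈ Finset.range (p - i).val := Finset.mem_range.mpr (by omega)
      have h9 := Finset.single_le_sum
        (f := fun t : ℕ => D (i + (t : Fin n)) (i + (t : Fin n) + 1))
        (fun t _ => hnn _ _) h0
      simpa [Aa, hydef] using h9
    have huv : Aa D i (p - i).val ≤ Aa D i (r - i).val := by
      simp only [Aa]
      exact Finset.sum_le_sum_of_subset_of_nonneg (Finset.range_subset_range.mpr hab)
        (fun t _ _ => hnn _ _)
    have hvS : Aa D i (r - i).val ≤ S - x := by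
      rw [← hAn1]
      simp only [Aa]
      exact Finset.sum_le_sum_of_subset_of_nonneg (Finset.range_subset_range.mpr (by omega))
        (fun t _ _ => hnn _ _)
    have hxnn : (0 : ℝ) ≤ x := by rw [hxdef]; exact hnn _ _
    have hynn : (0 : ℝ) ≤ y := by rw [hydef]; exact hnn _ _
    have hk := keyineq x y (Aa D i (p - i).val) (Aa D i (r - i).val) S hxnn hynn hyu huv hvS
    rw [hDpi, hDir, hD13]
    have hmin : D p r ≤ min (Aa D i (r - i).val - Aa D i (p - i).val)
        (S - (Aa D i (r - i).val - Aa D i (p - i).val)) := le_min hb1' hb2'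
    have hxy : x + y = min x (S - x) + min y (S - y) := by rw [← hDim1, ← hDi1y]
    have hminle := min_le_left (Aa D i (r - i).val - Aa D i (p - i).val)
      (S - (Aa D i (r - i).val - Aa D i (p - i).val))
    linarith [hk, hmin, hxy]
  have htri' : D (i - 1) (i + 1) ≤ x + y := by
    have h9 := htri (i - 1) (i + 1) i
    rw [← hxdef] at h9
    have h10 : D i (i + 1) = y := hydef.symm
    linarith [h9, h10]
  have hle : x + y - D (i - 1) (i + 1) ≤ 0 := by
    rw [← hcomp i]
    apply le_csInf
    · exact ⟨D (i + 1) i + D i (i + 1) - D (i + 1) (i + 1), ⟨i + 1, i + 1, hne1, hne1, rfl⟩⟩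
    · rintro z ⟨p, r, hp, hr, rfl⟩
      rcases le_total (p - i).val (r - i).val with h|h
      · exact key p r hp hr h
      · have hk := key r p hr hp h
        have e1 := hsym p i
        have e2 := hsym i r
        have e3 := hsym p r
        linarith [hk, e1, e2, e3]
  linarith [htri', hle]
end
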